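/- arXiv:2103.05702 — 2 statements merged into one kernel-verified Lean document; each statement's English description precedes it below -/
import Mathlib

section
/- Let H be a finite-dimensional complex Hilbert space and let k be an integer with 4 ≤ 2k ≤ dim H and k = dim H − 3. If X, Y are non-compatible adjacent k-dimensional subspaces of H, then there are infinitely many k-dimensional subspaces Z of H ortho-adjacent to both X and Y and such that there is precisely one k-dimensional subspace Z' of H ortho-adjacent to each of X, Y and Z. -/
noncomputable section

open scoped Classical

variable {H : Type*} [NormedAddCommGroup H] [InnerProductSpace ℂ H] [CompleteSpace H]

/-- The orthogonal projection onto `X`, as an operator `H → H` (junk value `0` if the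
orthogonal projection onto `X` does not exist; it always exists for finite-dimensional,
and more generally complete, subspaces). -/
noncomputable def projOn (X : Submodule ℂ H) : H →L[ℂ] H :=
  if h : X.HasOrthogonalProjection then
    haveI := h
    X.subtypeL.comp X.orthogonalProjectionOnto
  else 0

/-- Two subspaces of `H` are compatible if their orthogonal projections commute. -/
def Compatible (X Y : Submodule ℂ H) : Prop :=
  projOn X * projOn Y = projOn Y * projOn X

/-- `X` is a `k`-dimensional subspace of `H`. -/
def IsDim (k : ℕ) (X : Submodule ℂ H) : Prop :=
  FiniteDimensional ℂ X ∧ Module.finrank ℂ X = k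

/-- Two (distinct) `k`-dimensional subspaces are adjacent if their intersection is
`(k-1)`-dimensional. -/
def AdjacentSub (k : ℕ) (X Y : Submodule ℂ H) : Prop :=
  X ≠ Y ∧ Module.finrank ℂ ↥(X ⊓ Y) = k - 1

/-- Ortho-adjacency: adjacent and compatible. -/
def OrthoAdjacent (k : ℕ) (X Y : Submodule ℂ H) : Prop :=
  AdjacentSub k X Y ∧ Compatible X Y

/-- The ortho-Grassmann graph `Γ⊥_k(H)` on the `k`-dimensional subspaces of `H`:
two `k`-dimensional subspaces are connected by an edge if they are ortho-adjacent. -/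
def orthoGrassmannGraph (H : Type*) [NormedAddCommGroup H] [InnerProductSpace ℂ H]
    [CompleteSpace H] (k : ℕ) : SimpleGraph {X : Submodule ℂ H // IsDim k X} where
  Adj X Y := OrthoAdjacent k X.1 Y.1
  symm := ⟨by
    rintro X Y ⟨⟨hne, hdim⟩, hc⟩
    refine ⟨⟨hne.symm, by rwa [inf_comm]⟩, ?_⟩
    unfold Compatible at hc ⊢
    exact hc.symm⟩
  loopless := ⟨fun X h => h.1.1 rfl⟩

/-- The Grassmann graph `Γ_k(H)` on the `k`-dimensional subspaces of `H`:
two `k`-dimensional subspaces are connected by an edge if they are adjacent. -/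
def grassmannGraph (H : Type*) [NormedAddCommGroup H] [InnerProductSpace ℂ H]
    [CompleteSpace H] (k : ℕ) : SimpleGraph {X : Submodule ℂ H // IsDim k X} where
  Adj X Y := AdjacentSub k X.1 Y.1
  symm := ⟨by
    rintro X Y ⟨hne, hdim⟩
    exact ⟨hne.symm, by rwa [inf_comm]⟩⟩
  loopless := ⟨fun X h => h.1 rfl⟩

section HelperLemmas
open Module Submodule

set_option linter.unusedSectionVars false

section Helpers
variable [FiniteDimensional ℂ H]

lemma projOn_apply (X : Submodule ℂ H) (v : H) :
    projOn X v = (orthogonalProjection X v : H) := by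
  have h : HasOrthogonalProjection X := inferInstance
  rw [projOn, dif_pos h]
  rfl

lemma key_proj {A B C X Z : Submodule ℂ H}
    (hX : X = A ⊔ B) (hZ : Z = A ⊔ C) (hCX : C ≤ Xᗮ) (v : H) :
    (orthogonalProjection X (orthogonalProjection Z v : H) : H)
      = (orthogonalProjection A v : H) := by
  have hAX : A ≤ X := hX ▸ le_sup_left
  have hAZ : A ≤ Z := hZ ▸ le_sup_left
  have hz : (orthogonalProjection Z v : H) ∈ A ⊔ C :=
    le_of_eq hZ (orthogonalProjection Z v).2
  obtain ⟨a, ha, c, hc, hac⟩ := Submodule.mem_sup.mp hz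
  have h1 : (orthogonalProjection X (orthogonalProjection Z v : H) : H) = a := by
    rw [← hac, map_add]
    have : orthogonalProjection X a = ⟨a, hAX ha⟩ := by
      simpa using orthogonalProjection_mem_subspace_eq_self (⟨a, hAX ha⟩ : X)
    rw [this, orthogonalProjectionOnto_apply_of_mem_orthogonal (hCX hc)]
    simp
  have h2 : (orthogonalProjection A v : H) = a := by
    rw [← orthogonalProjectionOnto_starProjection_of_le hAZ v, starProjection_apply, ← hac, map_add]
    have ha' : orthogonalProjection A a = ⟨a, ha⟩ := by
      simpa using orthogonalProjection_mem_subspace_eq_self (⟨a, ha⟩ : A)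
    have hcA : c ∈ Aᗮ := (Submodule.orthogonal_le hAX) (hCX hc)
    rw [ha', orthogonalProjectionOnto_apply_of_mem_orthogonal hcA]
    simp
  rw [h1, h2]

lemma compat_of {A B C X Z : Submodule ℂ H}
    (hX : X = A ⊔ B) (hZ : Z = A ⊔ C) (hBZ : B ≤ Zᗮ) (hCX : C ≤ Xᗮ) :
    Compatible X Z := by
  unfold Compatible
  ext v
  rw [ContinuousLinearMap.mul_apply, ContinuousLinearMap.mul_apply,
    projOn_apply, projOn_apply, projOn_apply, projOn_apply,
    key_proj hX hZ hCX v, key_proj hZ hX hBZ v]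

lemma perp_of_compat {X Z M : Submodule ℂ H}
    (hc : Compatible X Z) (hXZ : X ⊓ Z ≤ M) {w : H} (hw : w ∈ Z) (hwM : w ∈ Mᗮ) :
    w ∈ Xᗮ := by
  have hcomm : projOn X (projOn Z w) = projOn Z (projOn X w) :=
    congrFun (congrArg DFunLike.coe hc) w
  rw [projOn_apply, projOn_apply, projOn_apply, projOn_apply] at hcomm
  have hZw : orthogonalProjection Z w = ⟨w, hw⟩ := by
    simpa using orthogonalProjection_mem_subspace_eq_self (⟨w, hw⟩ : Z)
  rw [hZw] at hcomm
  set q : H := (orthogonalProjection X w : H) with hq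
  have hqX : q ∈ X := (orthogonalProjection X w).2
  have hqZ : q ∈ Z := by
    rw [show (q : H) = (orthogonalProjection Z q : H) from hcomm]
    exact (orthogonalProjection Z q).2
  have hqM : q ∈ M := hXZ ⟨hqX, hqZ⟩
  have h1 : inner ℂ q (w - q) = (0 : ℂ) :=
    (Submodule.mem_orthogonal _ _).mp (sub_starProjection_mem_orthogonal (K := X) w) q hqX
  have h2 : inner ℂ q w = (0 : ℂ) := (Submodule.mem_orthogonal _ _).mp hwM q hqM
  have h3 : inner ℂ q q = (0 : ℂ) := by
    rw [inner_sub_right, h2] at h1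
    linear_combination -h1
  have hq0 : q = 0 := inner_self_eq_zero.mp h3
  have : orthogonalProjection X w = 0 := by
    ext; exact hq0
  exact orthogonalProjectionOnto_eq_zero_iff.mp this

lemma eq_zero_of_mem_inf_orth {N : Submodule ℂ H} {v : H} (h1 : v ∈ N) (h2 : v ∈ Nᗮ) :
    v = 0 :=
  (Submodule.mem_bot ℂ).mp ((N.orthogonal_disjoint).le_bot (Submodule.mem_inf.mpr ⟨h1, h2⟩))

lemma notmem_of_orth {N T : Submodule ℂ H} {u : H} (hu : u ∈ Nᗮ) (hu0 : u ≠ 0)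
    (hTN : T ≤ N) : u ∉ T := fun h => hu0 (eq_zero_of_mem_inf_orth (hTN h) hu)

/-- Intersection of `M ⊔ ⟨u⟩` with any intermediate `M ≤ T ≤ N` is `M`, for `u ⊥ N`. -/
lemma inf_line {M T N : Submodule ℂ H} (hMT : M ≤ T) (hTN : T ≤ N)
    {u : H} (hu : u ∈ Nᗮ) : (M ⊔ span ℂ {u}) ⊓ T = M := by
  apply le_antisymm
  · rintro v ⟨hv1, hvT⟩
    obtain ⟨m, hm, w, hw, hmw⟩ := Submodule.mem_sup.mp hv1
    obtain ⟨a, rfl⟩ := Submodule.mem_span_singleton.mp hw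
    have hN : a • u ∈ N := by
      have : a • u = v - m := by rw [← hmw]; abel
      rw [this]
      exact Submodule.sub_mem N (hTN hvT) (hTN (hMT hm))
    have h0 : a • u = 0 := eq_zero_of_mem_inf_orth hN (Submodule.smul_mem _ a hu)
    rw [← hmw, h0, add_zero]
    exact hm
  · exact le_inf le_sup_left hMT

lemma rank_line {k : ℕ} {M N : Submodule ℂ H} (hMN : M ≤ N) (hM : finrank ℂ M = k - 1)
    (hk : 1 ≤ k) {u : H} (hu : u ∈ Nᗮ) (hu0 : u ≠ 0) :
    finrank ℂ ↥(M ⊔ span ℂ {u}) = k := by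
  have hdisj : M ⊓ span ℂ {u} = ⊥ := by
    apply disjoint_iff.mp
    apply Disjoint.mono hMN _ (N.orthogonal_disjoint)
    rw [Submodule.span_le, Set.singleton_subset_iff]
    exact hu
  have := Submodule.finrank_sup_add_finrank_inf_eq M (span ℂ {u})
  rw [hdisj, finrank_span_singleton hu0, hM] at this
  simp at this
  omega

/-- Writing a `k`-dimensional `T ⊇ M`, `dim M = k-1`, as `M ⊔ ⟨x₀⟩` with `x₀ ⊥ M`. -/
lemma exists_perp_compl {k : ℕ} {M T : Submodule ℂ H} (hMT : M ≤ T)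
    (hM : finrank ℂ M = k - 1) (hT : finrank ℂ T = k) (hk : 1 ≤ k) :
    ∃ x₀ : H, x₀ ∈ T ∧ x₀ ∈ Mᗮ ∧ x₀ ≠ 0 ∧ T = M ⊔ span ℂ {x₀} := by
  have hlt : M < T := lt_of_le_of_ne hMT (by
    intro h
    rw [h, hT] at hM
    omega)
  obtain ⟨x, hxT, hxM⟩ := SetLike.exists_of_lt hlt
  refine ⟨x - (orthogonalProjection M x : H), ?_, sub_starProjection_mem_orthogonal (K := M) x, ?_, ?_⟩
  · exact Submodule.sub_mem T hxT (hMT (orthogonalProjection M x).2)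
  · intro h
    apply hxM
    rw [sub_eq_zero.mp h]
    exact (orthogonalProjection M x).2
  · set x₀ : H := x - (orthogonalProjection M x : H) with hx₀
    have hx₀T : x₀ ∈ T := Submodule.sub_mem T hxT (hMT (orthogonalProjection M x).2)
    have hx₀M : x₀ ∈ Mᗮ := sub_starProjection_mem_orthogonal (K := M) x
    have hx₀0 : x₀ ≠ 0 := by
      intro h
      apply hxM
      rw [sub_eq_zero.mp h]
      exact (orthogonalProjection M x).2
    have hle : M ⊔ span ℂ {x₀} ≤ T := by
      apply sup_le hMT
      rw [Submodule.span_le, Set.singleton_subset_iff]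
      exact hx₀T
    have hdisj : M ⊓ span ℂ {x₀} = ⊥ := by
      apply disjoint_iff.mp
      apply Disjoint.mono_right _ (M.orthogonal_disjoint)
      rw [Submodule.span_le, Set.singleton_subset_iff]
      exact hx₀M
    have hrk : finrank ℂ ↥(M ⊔ span ℂ {x₀}) = k := by
      have := Submodule.finrank_sup_add_finrank_inf_eq M (span ℂ {x₀})
      rw [hdisj, finrank_span_singleton hx₀0, hM] at this
      simp at this
      omega
    exact (Submodule.eq_of_le_of_finrank_le hle (by rw [hrk, hT])).symm

lemma isdim_line {k : ℕ} {M N : Submodule ℂ H} (hMN : M ≤ N) (hM : finrank ℂ M = k - 1)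
    (hk : 1 ≤ k) {u : H} (hu : u ∈ Nᗮ) (hu0 : u ≠ 0) :
    IsDim k (M ⊔ span ℂ {u}) :=
  ⟨inferInstance, rank_line hMN hM hk hu hu0⟩

lemma oa_line {k : ℕ} {M T N : Submodule ℂ H} (hMT : M ≤ T) (hTN : T ≤ N)
    (hM : finrank ℂ M = k - 1) (hT : finrank ℂ T = k) (hk : 1 ≤ k)
    {u : H} (hu : u ∈ Nᗮ) (hu0 : u ≠ 0) :
    OrthoAdjacent k (M ⊔ span ℂ {u}) T := by
  obtain ⟨x₀, hx₀T, hx₀M, hx₀0, hTeq⟩ := exists_perp_compl hMT hM hT hk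
  constructor
  · constructor
    · intro h
      exact notmem_of_orth hu hu0 hTN
        (h ▸ (le_sup_right : span ℂ {u} ≤ _) (Submodule.mem_span_singleton_self u))
    · rw [inf_line hMT hTN hu, hM]
  · apply compat_of rfl hTeq
    · rw [Submodule.span_le, Set.singleton_subset_iff]
      exact Submodule.orthogonal_le hTN hu
    · rw [Submodule.span_le, Set.singleton_subset_iff, ← Submodule.inf_orthogonal]
      refine ⟨hx₀M, Submodule.mem_orthogonal_singleton_iff_inner_left.mpr ?_⟩
      exact (Submodule.mem_orthogonal _ _).mp hu x₀ (hTN hx₀T)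

lemma inf_lines {M N : Submodule ℂ H} (hMN : M ≤ N) {u u' : H}
    (hu : u ∈ Nᗮ) (hu' : u' ∈ Nᗮ) (hu0' : u' ≠ 0) (huu' : (inner ℂ u' u : ℂ) = 0) :
    (M ⊔ span ℂ {u}) ⊓ (M ⊔ span ℂ {u'}) ≤ M := by
  rintro v ⟨hv1, hv2⟩
  obtain ⟨m, hm, w, hw, hmw⟩ := Submodule.mem_sup.mp hv1
  obtain ⟨a, rfl⟩ := Submodule.mem_span_singleton.mp hw
  obtain ⟨m', hm', w', hw', hmw'⟩ := Submodule.mem_sup.mp hv2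
  obtain ⟨a', rfl⟩ := Submodule.mem_span_singleton.mp hw'
  have hsub : a • u - a' • u' = m' - m := by
    rw [← sub_eq_zero]
    have : a • u - a' • u' - (m' - m) = (m + a • u) - (m' + a' • u') := by abel
    rw [this, hmw, hmw', sub_self]
  have h0 : a • u - a' • u' = 0 := by
    apply eq_zero_of_mem_inf_orth (N := N)
    · rw [hsub]; exact Submodule.sub_mem N (hMN hm') (hMN hm)
    · exact Submodule.sub_mem _ (Submodule.smul_mem _ a hu) (Submodule.smul_mem _ a' hu')
  have heq : a • u = a' • u' := sub_eq_zero.mp h0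
  have hinner : (inner ℂ u' (a' • u') : ℂ) = 0 := by
    rw [← heq, inner_smul_right, huu', mul_zero]
  rw [inner_smul_right, mul_eq_zero] at hinner
  rcases hinner with h | h
  · rw [← hmw', h, zero_smul, add_zero]; exact hm'
  · exact absurd (inner_self_eq_zero.mp h) hu0'

lemma oa_lines {k : ℕ} {M N : Submodule ℂ H} (hMN : M ≤ N) (hM : finrank ℂ M = k - 1)
    (hk : 1 ≤ k) {u u' : H} (hu : u ∈ Nᗮ) (hu' : u' ∈ Nᗮ) (hu0 : u ≠ 0) (hu0' : u' ≠ 0)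
    (huu' : (inner ℂ u u' : ℂ) = 0) :
    OrthoAdjacent k (M ⊔ span ℂ {u}) (M ⊔ span ℂ {u'}) := by
  have huu'2 : (inner ℂ u' u : ℂ) = 0 := inner_eq_zero_symm.mp huu'
  have hinf : (M ⊔ span ℂ {u}) ⊓ (M ⊔ span ℂ {u'}) = M :=
    le_antisymm (inf_lines hMN hu hu' hu0' huu'2) (le_inf le_sup_left le_sup_left)
  constructor
  · constructor
    · intro h
      have : u ∈ M := by
        apply inf_lines hMN hu hu' hu0' huu'2
        exact ⟨(le_sup_right : span ℂ {u} ≤ _) (Submodule.mem_span_singleton_self u),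
          h ▸ (le_sup_right : span ℂ {u} ≤ _) (Submodule.mem_span_singleton_self u)⟩
      exact hu0 (eq_zero_of_mem_inf_orth (hMN this) hu)
    · rw [hinf, hM]
  · apply compat_of rfl rfl
    · rw [Submodule.span_le, Set.singleton_subset_iff, ← Submodule.inf_orthogonal]
      refine ⟨Submodule.orthogonal_le hMN hu, ?_⟩
      exact Submodule.mem_orthogonal_singleton_iff_inner_right.mpr huu'2
    · rw [Submodule.span_le, Set.singleton_subset_iff, ← Submodule.inf_orthogonal]
      refine ⟨Submodule.orthogonal_le hMN hu', ?_⟩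
      exact Submodule.mem_orthogonal_singleton_iff_inner_right.mpr huu'

end Helpers

lemma compat_symm {X Z : Submodule ℂ H} (h : Compatible X Z) : Compatible Z X := h.symm

/-- Suppose `H` is finite-dimensional, `4 ≤ 2k ≤ dim H` and `k = dim H - 3`. If `X, Y` are
non-compatible adjacent `k`-dimensional subspaces of `H`, then there are infinitely many
`k`-dimensional subspaces `Z` ortho-adjacent to both `X, Y` and such that there is precisely
one `k`-dimensional subspace `Z'` ortho-adjacent to each of `X, Y, Z`. -/
theorem infinite_common_neighbours_with_unique
    [FiniteDimensional ℂ H] (k : ℕ) (hk : 2 ≤ k) (h2k : 2 * k ≤ Module.finrank ℂ H)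
    (hk3 : k = Module.finrank ℂ H - 3)
    (X Y : Submodule ℂ H) (hX : IsDim k X) (hY : IsDim k Y)
    (hadj : AdjacentSub k X Y) (hnc : ¬ Compatible X Y) :
    {Z : Submodule ℂ H | IsDim k Z ∧ OrthoAdjacent k Z X ∧ OrthoAdjacent k Z Y ∧
      (∃! Z' : Submodule ℂ H, IsDim k Z' ∧ OrthoAdjacent k Z' X ∧ OrthoAdjacent k Z' Y ∧
        OrthoAdjacent k Z' Z)}.Infinite := by
  clear hnc
  obtain ⟨-, hXr⟩ := hX
  obtain ⟨-, hYr⟩ := hY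
  obtain ⟨hXY, hMr⟩ := hadj
  have hk1 : 1 ≤ k := by omega
  have hn : Module.finrank ℂ H = k + 3 := by omega
  set M : Submodule ℂ H := X ⊓ Y with hM
  set N : Submodule ℂ H := X ⊔ Y with hN
  have hMX : M ≤ X := inf_le_left
  have hMY : M ≤ Y := inf_le_right
  have hXN : X ≤ N := le_sup_left
  have hYN : Y ≤ N := le_sup_right
  have hMN : M ≤ N := hMX.trans hXN
  have hNr : finrank ℂ N = k + 1 := by
    have := Submodule.finrank_sup_add_finrank_inf_eq X Y
    rw [← hM, ← hN, hMr, hXr, hYr] at this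
    omega
  have hNor : finrank ℂ ↥(Nᗮ) = 2 := by
    have := Submodule.finrank_add_finrank_orthogonal N
    rw [hNr, hn] at this
    omega
  -- orthonormal pair in Nᗮ
  obtain ⟨e₁, e₂, he₁, he₂, h11, h22, h12, h21⟩ :
      ∃ e₁ e₂ : H, e₁ ∈ Nᗮ ∧ e₂ ∈ Nᗮ ∧ (inner ℂ e₁ e₁ : ℂ) = 1 ∧ (inner ℂ e₂ e₂ : ℂ) = 1 ∧
        (inner ℂ e₁ e₂ : ℂ) = 0 ∧ (inner ℂ e₂ e₁ : ℂ) = 0 := by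
    set b := stdOrthonormalBasis ℂ ↥(Nᗮ) with hb
    have hite := orthonormal_iff_ite.mp b.orthonormal
    refine ⟨(b ⟨0, by omega⟩ : ↥(Nᗮ)), (b ⟨1, by omega⟩ : ↥(Nᗮ)),
      (b ⟨0, by omega⟩).2, (b ⟨1, by omega⟩).2, ?_, ?_, ?_, ?_⟩
    · have := hite ⟨0, by omega⟩ ⟨0, by omega⟩
      rw [Submodule.coe_inner] at this
      simpa using this
    · have := hite ⟨1, by omega⟩ ⟨1, by omega⟩
      rw [Submodule.coe_inner] at this
      simpa using this
    · have := hite ⟨0, by omega⟩ ⟨1, by omega⟩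
      rw [Submodule.coe_inner] at this
      simpa using this
    · have := hite ⟨1, by omega⟩ ⟨0, by omega⟩
      rw [Submodule.coe_inner] at this
      simpa using this
  -- the lines
  set z : ℂ → H := fun c => e₁ + c • e₂ with hzdef
  set z' : ℂ → H := fun c => e₂ - (starRingEnd ℂ c) • e₁ with hz'def
  have hzmem : ∀ c, z c ∈ Nᗮ := fun c => Submodule.add_mem _ he₁ (Submodule.smul_mem _ c he₂)
  have hz'mem : ∀ c, z' c ∈ Nᗮ := fun c =>
    Submodule.sub_mem _ he₂ (Submodule.smul_mem _ _ he₁)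
  have hinner_z : ∀ c, (inner ℂ e₁ (z c) : ℂ) = 1 := by
    intro c
    simp [hzdef, inner_add_right, inner_smul_right, h11, h12, -inner_self_eq_norm_sq_to_K]
  have hinner_z2 : ∀ c, (inner ℂ e₂ (z c) : ℂ) = c := by
    intro c
    simp [hzdef, inner_add_right, inner_smul_right, h21, h22, -inner_self_eq_norm_sq_to_K]
  have hzne : ∀ c, z c ≠ 0 := by
    intro c h
    have := hinner_z c
    rw [h, inner_zero_right] at this
    exact one_ne_zero this.symm
  have hz'ne : ∀ c, z' c ≠ 0 := by
    intro c h
    have : (inner ℂ e₂ (z' c) : ℂ) = 1 := by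
      simp [hz'def, inner_sub_right, inner_smul_right, h21, h22, -inner_self_eq_norm_sq_to_K]
    rw [h, inner_zero_right] at this
    exact one_ne_zero this.symm
  have horth : ∀ c, (inner ℂ (z c) (z' c) : ℂ) = 0 := by
    intro c
    simp [hzdef, hz'def, inner_sub_right, inner_smul_right, inner_add_left,
      inner_smul_left, h11, h12, h21, h22, -inner_self_eq_norm_sq_to_K]
  -- subset inclusion
  have hsubset : Set.range (fun c : ℂ => M ⊔ span ℂ {z c}) ⊆
      {Z : Submodule ℂ H | IsDim k Z ∧ OrthoAdjacent k Z X ∧ OrthoAdjacent k Z Y ∧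
        (∃! Z' : Submodule ℂ H, IsDim k Z' ∧ OrthoAdjacent k Z' X ∧ OrthoAdjacent k Z' Y ∧
          OrthoAdjacent k Z' Z)} := by
    rintro - ⟨c, rfl⟩
    refine ⟨isdim_line hMN hMr hk1 (hzmem c) (hzne c),
      oa_line hMX hXN hMr hXr hk1 (hzmem c) (hzne c),
      oa_line hMY hYN hMr hYr hk1 (hzmem c) (hzne c), ?_⟩
    refine ⟨M ⊔ span ℂ {z' c}, ⟨isdim_line hMN hMr hk1 (hz'mem c) (hz'ne c),
      oa_line hMX hXN hMr hXr hk1 (hz'mem c) (hz'ne c),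
      oa_line hMY hYN hMr hYr hk1 (hz'mem c) (hz'ne c),
      oa_lines hMN hMr hk1 (hz'mem c) (hzmem c) (hz'ne c) (hzne c)
        (inner_eq_zero_symm.mp (horth c))⟩, ?_⟩
    rintro W ⟨⟨-, hWr⟩, ⟨⟨hWXne, hWXr⟩, hWXc⟩, ⟨⟨hWYne, hWYr⟩, hWYc⟩, ⟨⟨hWZne, hWZr⟩, hWZc⟩⟩
    -- Step A : M ≤ W
    have hMW : M ≤ W := by
      by_contra hMW
      have hWMlt : W ⊓ M < M :=
        lt_of_le_of_ne inf_le_right (fun h => hMW (by rw [← h]; exact inf_le_left))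
      have h1 : finrank ℂ ↥(W ⊓ M) < k - 1 := by
        have := Submodule.finrank_lt_finrank_of_lt hWMlt
        omega
      have hPQ : (W ⊓ X) ⊓ (W ⊓ Y) = W ⊓ M := by
        rw [hM]
        ext v
        simp only [Submodule.mem_inf]
        tauto
      have hsum := Submodule.finrank_sup_add_finrank_inf_eq (W ⊓ X) (W ⊓ Y)
      rw [hPQ, hWXr, hWYr] at hsum
      have hPQW : (W ⊓ X) ⊔ (W ⊓ Y) ≤ W := sup_le inf_le_left inf_le_left
      have hWeq : (W ⊓ X) ⊔ (W ⊓ Y) = W :=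
        Submodule.eq_of_le_of_finrank_le hPQW (by rw [hWr]; omega)
      have hWN : W ≤ N := by
        rw [← hWeq, hN]
        exact sup_le (inf_le_right.trans le_sup_left) (inf_le_right.trans le_sup_right)
      have hWZM : W ⊓ (M ⊔ span ℂ {z c}) ≤ M := by
        rintro v ⟨hv1, hv2⟩
        have hvmem : v ∈ (M ⊔ span ℂ {z c}) ⊓ N := ⟨hv2, hWN hv1⟩
        rwa [inf_line hMN le_rfl (hzmem c)] at hvmem
      have hfin : W ⊓ (M ⊔ span ℂ {z c}) = M :=
        Submodule.eq_of_le_of_finrank_le hWZM (by rw [hMr, hWZr])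
      exact hMW (by rw [← hfin]; exact inf_le_left)
    -- Step B : W = M ⊔ ⟨w⟩ with w ⊥ M
    obtain ⟨w, hwW, hwM, hw0, hWeq2⟩ := exists_perp_compl hMW hMr hWr hk1
    -- Step C : w is orthogonal to X, Y, and Z c
    have hinfX : X ⊓ W ≤ M := by
      have hMeq : M = W ⊓ X :=
        Submodule.eq_of_le_of_finrank_le (le_inf hMW hMX) (by rw [hMr, hWXr])
      rw [inf_comm, ← hMeq]
    have hinfY : Y ⊓ W ≤ M := by
      have hMeq : M = W ⊓ Y :=
        Submodule.eq_of_le_of_finrank_le (le_inf hMW hMY) (by rw [hMr, hWYr])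
      rw [inf_comm, ← hMeq]
    have hinfZ : (M ⊔ span ℂ {z c}) ⊓ W ≤ M := by
      have hMeq : M = W ⊓ (M ⊔ span ℂ {z c}) :=
        Submodule.eq_of_le_of_finrank_le (le_inf hMW le_sup_left) (by rw [hMr, hWZr])
      rw [inf_comm, ← hMeq]
    have hwX : w ∈ Xᗮ := perp_of_compat (compat_symm hWXc) hinfX hwW hwM
    have hwY : w ∈ Yᗮ := perp_of_compat (compat_symm hWYc) hinfY hwW hwM
    have hwZ : w ∈ (M ⊔ span ℂ {z c})ᗮ := perp_of_compat (compat_symm hWZc) hinfZ hwW hwM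
    have hwN : w ∈ Nᗮ := by
      rw [hN, ← Submodule.inf_orthogonal]
      exact ⟨hwX, hwY⟩
    have hwz : (inner ℂ (z c) w : ℂ) = 0 :=
      (Submodule.mem_orthogonal _ _).mp hwZ (z c)
        ((le_sup_right : span ℂ {z c} ≤ _) (Submodule.mem_span_singleton_self _))
    -- Step D : Nᗮ = ⟨z c⟩ ⊔ ⟨z' c⟩
    have hspan : span ℂ {z c} ⊔ span ℂ {z' c} = Nᗮ := by
      have hle : span ℂ {z c} ⊔ span ℂ {z' c} ≤ Nᗮ := by
        apply sup_le
        · rw [Submodule.span_le, Set.singleton_subset_iff]; exact hzmem c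
        · rw [Submodule.span_le, Set.singleton_subset_iff]; exact hz'mem c
      have hdisj : span ℂ {z c} ⊓ span ℂ {z' c} = ⊥ := by
        rw [Submodule.eq_bot_iff]
        rintro v ⟨hv1, hv2⟩
        obtain ⟨a, rfl⟩ := Submodule.mem_span_singleton.mp hv1
        obtain ⟨a', ha'⟩ := Submodule.mem_span_singleton.mp hv2
        have h2 : (inner ℂ (z c) (a • z c) : ℂ) = 0 := by
          rw [← ha', inner_smul_right, horth c, mul_zero]
        rw [inner_smul_right] at h2
        rcases mul_eq_zero.mp h2 with h | h
        · rw [h, zero_smul]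
        · exact absurd (inner_self_eq_zero.mp h) (hzne c)
      apply Submodule.eq_of_le_of_finrank_le hle
      have hfr := Submodule.finrank_sup_add_finrank_inf_eq (span ℂ {z c}) (span ℂ {z' c})
      rw [hdisj, finrank_span_singleton (hzne c), finrank_span_singleton (hz'ne c)] at hfr
      simp only [finrank_bot, add_zero] at hfr
      omega
    -- Step E : conclude
    have hwmem : w ∈ span ℂ {z c} ⊔ span ℂ {z' c} := by rw [hspan]; exact hwN
    obtain ⟨s, hs, t, ht, hst⟩ := Submodule.mem_sup.mp hwmem
    obtain ⟨a, rfl⟩ := Submodule.mem_span_singleton.mp hs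
    obtain ⟨bb, rfl⟩ := Submodule.mem_span_singleton.mp ht
    have hcalc : (inner ℂ (z c) (a • z c + bb • z' c) : ℂ) = a * inner ℂ (z c) (z c) := by
      rw [inner_add_right, inner_smul_right, inner_smul_right, horth c]
      ring
    rw [hst, hwz] at hcalc
    have ha0 : a = 0 := by
      rcases mul_eq_zero.mp hcalc.symm with h | h
      · exact h
      · exact absurd (inner_self_eq_zero.mp h) (hzne c)
    have hwval : w = bb • z' c := by rw [← hst, ha0, zero_smul, zero_add]
    have hbb : bb ≠ 0 := fun h => hw0 (by rw [hwval, h, zero_smul])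
    have hspanw : span ℂ {w} = span ℂ {z' c} := by
      rw [hwval]
      exact Submodule.span_singleton_smul_eq (isUnit_iff_ne_zero.mpr hbb) _
    rw [hWeq2, hspanw]
  -- injectivity
  have hinj : Function.Injective (fun c : ℂ => M ⊔ span ℂ {z c}) := by
    intro c c' h
    simp only at h
    have hzc : z c ∈ M ⊔ span ℂ {z c'} := by
      rw [← h]
      exact (le_sup_right : span ℂ {z c} ≤ _) (Submodule.mem_span_singleton_self _)
    obtain ⟨m, hm, ww, hww, hmw⟩ := Submodule.mem_sup.mp hzc
    obtain ⟨a, rfl⟩ := Submodule.mem_span_singleton.mp hww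
    have hdiff : z c - a • z c' = m := by rw [← hmw]; abel
    have h0 : z c - a • z c' = 0 :=
      eq_zero_of_mem_inf_orth (by rw [hdiff]; exact hMN hm)
        (Submodule.sub_mem _ (hzmem c) (Submodule.smul_mem _ a (hzmem c')))
    have heq : z c = a • z c' := sub_eq_zero.mp h0
    have h1 : (1 : ℂ) = a := by
      have hh := hinner_z c
      rw [heq, inner_smul_right, hinner_z c', mul_one] at hh
      exact hh.symm
    have h2 : c = a * c' := by
      have hh := hinner_z2 c
      rw [heq, inner_smul_right, hinner_z2 c'] at hh
      exact hh.symm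
    rw [← h1, one_mul] at h2
    exact h2
  exact (Set.infinite_range_of_injective hinj).mono hsubset

end HelperLemmas

end
end

section
/- Let H be a complex Hilbert space with dim H = 4. If X, Y are non-compatible adjacent 2-dimensional subspaces of H, then there are precisely two 2-dimensional subspaces of H ortho-adjacent to both X and Y, namely the sum of X ∩ Y and (X + Y)^⊥ and the orthogonal complement of X ∩ Y in X + Y, and these two subspaces are orthogonal to each other. -/
noncomputable section

open scoped Classical

variable {H : Type*} [NormedAddCommGroup H] [InnerProductSpace ℂ H] [CompleteSpace H]

section Helpers

open Module Submodule

set_option linter.unusedSectionVars false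

variable [FiniteDimensional ℂ H]

lemma projOn_def (X : Submodule ℂ H) :
    projOn X = X.subtypeL.comp X.orthogonalProjectionOnto := by
  have h : X.HasOrthogonalProjection := inferInstance
  rw [projOn, dif_pos h]

lemma projOn_apply_mem (X : Submodule ℂ H) (v : H) : projOn X v ∈ X := by
  rw [projOn_def]; exact (X.orthogonalProjectionOnto v).2

lemma projOn_eq_self (X : Submodule ℂ H) {v : H} (hv : v ∈ X) : projOn X v = v := by
  rw [projOn_def]; exact X.starProjection_eq_self_iff.mpr hv

lemma projOn_eq_zero (X : Submodule ℂ H) {v : H} (hv : v ∈ Xᗮ) : projOn X v = 0 := by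
  rw [projOn_def]
  show ((X.orthogonalProjectionOnto v : X) : H) = 0
  rw [Submodule.orthogonalProjectionOnto_apply_of_mem_orthogonal hv]
  rfl

lemma sub_projOn_mem_orthogonal (X : Submodule ℂ H) (v : H) : v - projOn X v ∈ Xᗮ := by
  rw [projOn_def]; exact Submodule.sub_starProjection_mem_orthogonal (K := X) v

lemma compatible_of_pieces {X Z A B C D : Submodule ℂ H}
    (hA : A ≤ X ⊓ Z) (hB : B ≤ X ⊓ Zᗮ) (hC : C ≤ Xᗮ ⊓ Z) (hD : D ≤ Xᗮ ⊓ Zᗮ)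
    (htop : A ⊔ B ⊔ C ⊔ D = ⊤) : Compatible X Z := by
  unfold Compatible
  rw [← ContinuousLinearMap.coe_inj, ← LinearMap.eqLocus_eq_top, eq_top_iff, ← htop]
  refine sup_le (sup_le (sup_le ?_ ?_) ?_) ?_ <;> intro v hv <;>
    simp only [SetLike.mem_coe, LinearMap.mem_eqLocus, ContinuousLinearMap.coe_coe, ContinuousLinearMap.mul_apply]
  · rw [projOn_eq_self Z (hA hv).2, projOn_eq_self X (hA hv).1, projOn_eq_self Z (hA hv).2]
  · rw [projOn_eq_zero Z (hB hv).2, projOn_eq_self X (hB hv).1, projOn_eq_zero Z (hB hv).2,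
      map_zero]
  · rw [projOn_eq_self Z (hC hv).2, projOn_eq_zero X (hC hv).1, map_zero]
  · rw [projOn_eq_zero Z (hD hv).2, projOn_eq_zero X (hD hv).1, map_zero, map_zero]

lemma le_decomp_of_compatible {Z X : Submodule ℂ H} (h : Compatible Z X) :
    Z ≤ (Z ⊓ X) ⊔ (Z ⊓ Xᗮ) := by
  intro z hz
  have h2 : projOn Z (projOn X z) = projOn X z := by
    have := DFunLike.congr_fun h z
    simp only [ContinuousLinearMap.mul_apply] at this
    rw [projOn_eq_self Z hz] at this
    exact this
  have hz1 : projOn X z ∈ Z ⊓ X := ⟨h2 ▸ projOn_apply_mem Z _, projOn_apply_mem X z⟩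
  have hz2 : z - projOn X z ∈ Z ⊓ Xᗮ := ⟨Z.sub_mem hz hz1.1, sub_projOn_mem_orthogonal X z⟩
  have hsum : z = projOn X z + (z - projOn X z) := by abel
  rw [hsum]
  exact add_mem (Submodule.mem_sup_left hz1) (Submodule.mem_sup_right hz2)

lemma sup_of_lines {a b Z : Submodule ℂ H} (haZ : a ≤ Z) (hbZ : b ≤ Z)
    (ha : finrank ℂ a = 1) (hb : finrank ℂ b = 1) (hZ : finrank ℂ Z = 2)
    (hne : a ≠ b) : a ⊔ b = Z := by
  have hinf : finrank ℂ ↥(a ⊓ b) = 0 := by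
    by_contra hcon
    have h1 : finrank ℂ ↥(a ⊓ b) ≤ 1 := ha ▸ Submodule.finrank_mono inf_le_left
    have h2 : finrank ℂ ↥(a ⊓ b) = 1 := by omega
    exact hne ((Submodule.eq_of_le_of_finrank_eq inf_le_left (h2.trans ha.symm)).symm.trans
      (Submodule.eq_of_le_of_finrank_eq inf_le_right (h2.trans hb.symm)))
  have h3 := Submodule.finrank_sup_add_finrank_inf_eq a b
  have h4 : finrank ℂ ↥(a ⊔ b) = finrank ℂ Z := by omega
  exact Submodule.eq_of_le_of_finrank_eq (sup_le haZ hbZ) h4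

lemma orthoAdj_Z1 {L M W : Submodule ℂ H} (hLW : L ≤ W) (hWM : W ≤ M)
    (hL : finrank ℂ L = 1) (hW : finrank ℂ W = 2)
    (hMp : finrank ℂ ↥(Mᗮ) = 1) (hZ : finrank ℂ ↥(L ⊔ Mᗮ) = 2) :
    OrthoAdjacent 2 (L ⊔ Mᗮ) W := by
  have hne : L ⊔ Mᗮ ≠ W := by
    intro h
    have h1 : Mᗮ ≤ M ⊓ Mᗮ := le_inf ((le_sup_right.trans h.le).trans hWM) le_rfl
    rw [M.inf_orthogonal_eq_bot, le_bot_iff] at h1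
    rw [h1] at hMp
    simp at hMp
  have hge : 1 ≤ finrank ℂ ↥((L ⊔ Mᗮ) ⊓ W) :=
    hL ▸ Submodule.finrank_mono (le_inf le_sup_left hLW)
  have hle2 : finrank ℂ ↥((L ⊔ Mᗮ) ⊓ W) ≤ 2 := hZ ▸ Submodule.finrank_mono inf_le_left
  have hne2 : finrank ℂ ↥((L ⊔ Mᗮ) ⊓ W) ≠ 2 := by
    intro h
    exact hne ((Submodule.eq_of_le_of_finrank_eq inf_le_left (h.trans hZ.symm)).symm.trans
      (Submodule.eq_of_le_of_finrank_eq inf_le_right (h.trans hW.symm)))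
  have hrank : finrank ℂ ↥((L ⊔ Mᗮ) ⊓ W) = 1 := by omega
  have hcomp : Compatible (L ⊔ Mᗮ) W := by
    apply compatible_of_pieces (A := L) (B := Mᗮ) (C := W ⊓ Lᗮ) (D := M ⊓ Wᗮ)
    · exact le_inf le_sup_left hLW
    · exact le_inf le_sup_right (Submodule.orthogonal_le hWM)
    · refine le_inf ?_ inf_le_left
      rw [← Submodule.inf_orthogonal, Submodule.orthogonal_orthogonal]
      exact le_inf inf_le_right (inf_le_left.trans hWM)
    · refine le_inf ?_ inf_le_right
      rw [← Submodule.inf_orthogonal, Submodule.orthogonal_orthogonal]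
      exact le_inf (inf_le_right.trans (Submodule.orthogonal_le hLW)) inf_le_left
    · have h1 : L ⊔ (Lᗮ ⊓ W) = W := Submodule.sup_orthogonal_inf_of_hasOrthogonalProjection hLW
      have h2 : W ⊔ (Wᗮ ⊓ M) = M := Submodule.sup_orthogonal_inf_of_hasOrthogonalProjection hWM
      have h3 : M ⊔ Mᗮ = ⊤ := Submodule.sup_orthogonal_of_hasOrthogonalProjection
      rw [eq_top_iff]
      have e1 : W ≤ L ⊔ Mᗮ ⊔ (W ⊓ Lᗮ) ⊔ (M ⊓ Wᗮ) :=
        h1.ge.trans (sup_le (le_sup_of_le_left (le_sup_of_le_left le_sup_left))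
          (le_sup_of_le_left (le_sup_of_le_right (le_of_eq (inf_comm _ _)))))
      have e2 : M ≤ L ⊔ Mᗮ ⊔ (W ⊓ Lᗮ) ⊔ (M ⊓ Wᗮ) :=
        h2.ge.trans (sup_le e1 (le_sup_of_le_right (le_of_eq (inf_comm _ _))))
      exact h3.ge.trans (sup_le e2 (le_sup_of_le_left (le_sup_of_le_left le_sup_right)))
  exact ⟨⟨hne, by simpa using hrank⟩, hcomp⟩

lemma orthoAdj_Z2 {L M W : Submodule ℂ H} (hLW : L ≤ W) (hWM : W ≤ M)
    (hL : finrank ℂ L = 1) (hW : finrank ℂ W = 2)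
    (hZ : finrank ℂ ↥(M ⊓ Lᗮ) = 2) :
    OrthoAdjacent 2 (M ⊓ Lᗮ) W := by
  have hWL : finrank ℂ ↥(W ⊓ Lᗮ) = 1 := by
    have h1 : L ⊔ (Lᗮ ⊓ W) = W := Submodule.sup_orthogonal_inf_of_hasOrthogonalProjection hLW
    have h2 := Submodule.finrank_sup_add_finrank_inf_eq L (Lᗮ ⊓ W)
    have h3 : L ⊓ (Lᗮ ⊓ W) = ⊥ := le_bot_iff.mp
      ((inf_le_inf_left L inf_le_left).trans_eq L.inf_orthogonal_eq_bot)
    rw [h1, h3, finrank_bot] at h2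
    rw [inf_comm]
    omega
  have hne : M ⊓ Lᗮ ≠ W := by
    intro h
    have h1 : L ≤ L ⊓ Lᗮ := le_inf le_rfl (hLW.trans (h ▸ inf_le_right))
    rw [L.inf_orthogonal_eq_bot, le_bot_iff] at h1
    rw [h1] at hL
    simp at hL
  have hge : 1 ≤ finrank ℂ ↥((M ⊓ Lᗮ) ⊓ W) :=
    hWL ▸ Submodule.finrank_mono (le_inf (le_inf (inf_le_left.trans hWM) inf_le_right) inf_le_left)
  have hle2 : finrank ℂ ↥((M ⊓ Lᗮ) ⊓ W) ≤ 2 := hZ ▸ Submodule.finrank_mono inf_le_left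
  have hne2 : finrank ℂ ↥((M ⊓ Lᗮ) ⊓ W) ≠ 2 := by
    intro h
    exact hne ((Submodule.eq_of_le_of_finrank_eq inf_le_left (h.trans hZ.symm)).symm.trans
      (Submodule.eq_of_le_of_finrank_eq inf_le_right (h.trans hW.symm)))
  have hrank : finrank ℂ ↥((M ⊓ Lᗮ) ⊓ W) = 1 := by omega
  have hcomp : Compatible (M ⊓ Lᗮ) W := by
    apply compatible_of_pieces (A := W ⊓ Lᗮ) (B := M ⊓ Wᗮ) (C := L) (D := Mᗮ)
    · exact le_inf (le_inf (inf_le_left.trans hWM) inf_le_right) inf_le_left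
    · exact le_inf (le_inf inf_le_left (inf_le_right.trans (Submodule.orthogonal_le hLW)))
        inf_le_right
    · exact le_inf (L.le_orthogonal_orthogonal.trans (Submodule.orthogonal_le inf_le_right)) hLW
    · exact le_inf (Submodule.orthogonal_le inf_le_left) (Submodule.orthogonal_le hWM)
    · have h1 : L ⊔ (Lᗮ ⊓ W) = W := Submodule.sup_orthogonal_inf_of_hasOrthogonalProjection hLW
      have h2 : W ⊔ (Wᗮ ⊓ M) = M := Submodule.sup_orthogonal_inf_of_hasOrthogonalProjection hWM
      have h3 : M ⊔ Mᗮ = ⊤ := Submodule.sup_orthogonal_of_hasOrthogonalProjection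
      rw [eq_top_iff]
      have e1 : W ≤ (W ⊓ Lᗮ) ⊔ (M ⊓ Wᗮ) ⊔ L ⊔ Mᗮ :=
        h1.ge.trans (sup_le (le_sup_of_le_left le_sup_right)
          (le_sup_of_le_left (le_sup_of_le_left (le_sup_of_le_left (le_of_eq (inf_comm _ _))))))
      have e2 : M ≤ (W ⊓ Lᗮ) ⊔ (M ⊓ Wᗮ) ⊔ L ⊔ Mᗮ :=
        h2.ge.trans (sup_le e1
          (le_sup_of_le_left (le_sup_of_le_left (le_sup_of_le_right (le_of_eq (inf_comm _ _))))))
      exact h3.ge.trans (sup_le e2 le_sup_right)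
  exact ⟨⟨hne, by simpa using hrank⟩, hcomp⟩

lemma forward_case {X Y Z : Submodule ℂ H}
    (hL1 : finrank ℂ ↥(X ⊓ Y) = 1)
    (hMp1 : finrank ℂ ↥((X ⊔ Y)ᗮ) = 1)
    (hZ22 : finrank ℂ ↥((X ⊔ Y) ⊓ (X ⊓ Y)ᗮ) = 2)
    (hZ2 : finrank ℂ Z = 2)
    (hZX : OrthoAdjacent 2 Z X) (hZY : OrthoAdjacent 2 Z Y) :
    Z = (X ⊓ Y) ⊔ (X ⊔ Y)ᗮ ∨ Z = (X ⊔ Y) ⊓ (X ⊓ Y)ᗮ := by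
  have hZXr : finrank ℂ ↥(Z ⊓ X) = 1 := by simpa using hZX.1.2
  have hZYr : finrank ℂ ↥(Z ⊓ Y) = 1 := by simpa using hZY.1.2
  have hdec : ∀ W : Submodule ℂ H, Compatible Z W → finrank ℂ ↥(Z ⊓ W) = 1 →
      finrank ℂ ↥(Z ⊓ Wᗮ) = 1 ∧ (Z ⊓ W) ⊔ (Z ⊓ Wᗮ) = Z := by
    intro W hc hr
    have hle : (Z ⊓ W) ⊔ (Z ⊓ Wᗮ) = Z :=
      le_antisymm (sup_le inf_le_left inf_le_left) (le_decomp_of_compatible hc)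
    have hinf : (Z ⊓ W) ⊓ (Z ⊓ Wᗮ) = ⊥ := le_bot_iff.mp
      ((inf_le_inf inf_le_right inf_le_right).trans_eq W.inf_orthogonal_eq_bot)
    have h2 := Submodule.finrank_sup_add_finrank_inf_eq (Z ⊓ W) (Z ⊓ Wᗮ)
    rw [hle, hinf, finrank_bot] at h2
    exact ⟨by omega, hle⟩
  obtain ⟨hmX, hdX⟩ := hdec X hZX.2 hZXr
  obtain ⟨hmY, hdY⟩ := hdec Y hZY.2 hZYr
  by_cases hll : Z ⊓ X = Z ⊓ Y
  · left
    have hZXL : Z ⊓ X = X ⊓ Y :=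
      Submodule.eq_of_le_of_finrank_eq (le_inf inf_le_right (hll.le.trans inf_le_right))
        (hZXr.trans hL1.symm)
    have hNle : ∀ {m : Submodule ℂ H}, m ≤ Z ⊓ (X ⊓ Y)ᗮ → finrank ℂ m = 1 →
        m = Z ⊓ (X ⊓ Y)ᗮ := by
      intro m hm hm1
      have hsup : (Z ⊓ X) ⊔ (Z ⊓ (X ⊓ Y)ᗮ) ≤ Z := sup_le inf_le_left inf_le_left
      have hinf : (Z ⊓ X) ⊓ (Z ⊓ (X ⊓ Y)ᗮ) = ⊥ := by
        rw [hZXL]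
        exact le_bot_iff.mp ((inf_le_inf le_rfl inf_le_right).trans_eq
          (X ⊓ Y).inf_orthogonal_eq_bot)
      have h2 := Submodule.finrank_sup_add_finrank_inf_eq (Z ⊓ X) (Z ⊓ (X ⊓ Y)ᗮ)
      rw [hinf, finrank_bot] at h2
      have h3 : finrank ℂ ↥((Z ⊓ X) ⊔ (Z ⊓ (X ⊓ Y)ᗮ)) ≤ 2 :=
        hZ2 ▸ Submodule.finrank_mono hsup
      have h5 : 1 ≤ finrank ℂ ↥(Z ⊓ (X ⊓ Y)ᗮ) := hm1 ▸ Submodule.finrank_mono hm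
      exact Submodule.eq_of_le_of_finrank_eq hm (by omega)
    have hmXe : Z ⊓ Xᗮ = Z ⊓ (X ⊓ Y)ᗮ :=
      hNle (le_inf inf_le_left (inf_le_right.trans (Submodule.orthogonal_le inf_le_left))) hmX
    have hmYe : Z ⊓ Yᗮ = Z ⊓ (X ⊓ Y)ᗮ :=
      hNle (le_inf inf_le_left (inf_le_right.trans (Submodule.orthogonal_le inf_le_right))) hmY
    have hmm : Z ⊓ Xᗮ ≤ (X ⊔ Y)ᗮ := by
      rw [← Submodule.inf_orthogonal]
      exact le_inf inf_le_right ((hmXe.trans hmYe.symm).le.trans inf_le_right)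
    have hmMp : Z ⊓ Xᗮ = (X ⊔ Y)ᗮ :=
      Submodule.eq_of_le_of_finrank_eq hmm (hmX.trans hMp1.symm)
    rw [← hdX, hZXL, hmMp]
  · right
    have hZXY : (Z ⊓ X) ⊔ (Z ⊓ Y) = Z := sup_of_lines inf_le_left inf_le_left hZXr hZYr hZ2 hll
    have hZM : Z ≤ X ⊔ Y := by
      rw [← hZXY]
      exact sup_le (inf_le_right.trans le_sup_left) (inf_le_right.trans le_sup_right)
    have hmm' : Z ⊓ Xᗮ ≠ Z ⊓ Yᗮ := by
      intro h
      have h1 : Z ⊓ Xᗮ ≤ (X ⊔ Y) ⊓ (X ⊔ Y)ᗮ := by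
        refine le_inf (inf_le_left.trans hZM) ?_
        rw [← Submodule.inf_orthogonal]
        exact le_inf inf_le_right (h.le.trans inf_le_right)
      rw [(X ⊔ Y).inf_orthogonal_eq_bot, le_bot_iff] at h1
      rw [h1] at hmX
      simp at hmX
    have hsupZ : (Z ⊓ Xᗮ) ⊔ (Z ⊓ Yᗮ) = Z :=
      sup_of_lines inf_le_left inf_le_left hmX hmY hZ2 hmm'
    have hZle : Z ≤ (X ⊔ Y) ⊓ (X ⊓ Y)ᗮ := by
      refine le_inf hZM ?_
      rw [← hsupZ]
      exact sup_le (inf_le_right.trans (Submodule.orthogonal_le inf_le_left))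
        (inf_le_right.trans (Submodule.orthogonal_le inf_le_right))
    exact Submodule.eq_of_le_of_finrank_eq hZle (hZ2.trans hZ22.symm)

end Helpers

/-- Suppose `dim H = 4`. If `X, Y` are non-compatible adjacent `2`-dimensional subspaces of
`H`, then there are precisely two `2`-dimensional subspaces of `H` ortho-adjacent to both
`X, Y`, namely `(X ∩ Y) + (X + Y)ᗮ` and the orthogonal complement of `X ∩ Y` in `X + Y`,
and these two subspaces are orthogonal to each other. -/
theorem common_neighbours_of_dim_four
    (hH : Module.rank ℂ H = 4)
    (X Y : Submodule ℂ H) (hX : IsDim 2 X) (hY : IsDim 2 Y)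
    (hadj : AdjacentSub 2 X Y) (hnc : ¬ Compatible X Y) :
    {Z : Submodule ℂ H | IsDim 2 Z ∧ OrthoAdjacent 2 Z X ∧ OrthoAdjacent 2 Z Y} =
      {(X ⊓ Y) ⊔ (X ⊔ Y)ᗮ, (X ⊔ Y) ⊓ (X ⊓ Y)ᗮ} ∧
    (X ⊓ Y) ⊔ (X ⊔ Y)ᗮ ≠ (X ⊔ Y) ⊓ (X ⊓ Y)ᗮ ∧
    ((X ⊓ Y) ⊔ (X ⊔ Y)ᗮ) ⟂ ((X ⊔ Y) ⊓ (X ⊓ Y)ᗮ) := by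
  haveI : FiniteDimensional ℂ H := Module.finite_of_rank_eq_nat hH
  have hH4 : Module.finrank ℂ H = 4 := Module.finrank_eq_of_rank_eq hH
  have hL1 : Module.finrank ℂ ↥(X ⊓ Y) = 1 := by simpa using hadj.2
  have hX2 : Module.finrank ℂ X = 2 := hX.2
  have hY2 : Module.finrank ℂ Y = 2 := hY.2
  have hM3 : Module.finrank ℂ ↥(X ⊔ Y) = 3 := by
    have := Submodule.finrank_sup_add_finrank_inf_eq X Y
    omega
  have hMp1 : Module.finrank ℂ ↥((X ⊔ Y)ᗮ) = 1 := by
    have := Submodule.finrank_add_finrank_orthogonal (K := X ⊔ Y)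
    omega
  have hLM : X ⊓ Y ≤ X ⊔ Y := inf_le_left.trans le_sup_left
  have hZ12 : Module.finrank ℂ ↥((X ⊓ Y) ⊔ (X ⊔ Y)ᗮ) = 2 := by
    have h2 := Submodule.finrank_sup_add_finrank_inf_eq (X ⊓ Y) ((X ⊔ Y)ᗮ)
    have hinf : (X ⊓ Y) ⊓ (X ⊔ Y)ᗮ = ⊥ := le_bot_iff.mp
      ((inf_le_inf hLM le_rfl).trans_eq (X ⊔ Y).inf_orthogonal_eq_bot)
    rw [hinf, finrank_bot] at h2
    omega
  have hZ22 : Module.finrank ℂ ↥((X ⊔ Y) ⊓ (X ⊓ Y)ᗮ) = 2 := by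
    have h1 : (X ⊓ Y) ⊔ ((X ⊓ Y)ᗮ ⊓ (X ⊔ Y)) = X ⊔ Y :=
      Submodule.sup_orthogonal_inf_of_hasOrthogonalProjection hLM
    have h2 := Submodule.finrank_sup_add_finrank_inf_eq (X ⊓ Y) ((X ⊓ Y)ᗮ ⊓ (X ⊔ Y))
    have hinf : (X ⊓ Y) ⊓ ((X ⊓ Y)ᗮ ⊓ (X ⊔ Y)) = ⊥ := le_bot_iff.mp
      ((inf_le_inf_left _ inf_le_left).trans_eq (X ⊓ Y).inf_orthogonal_eq_bot)
    rw [h1, hinf, finrank_bot] at h2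
    rw [inf_comm]
    omega
  have hO : ((X ⊓ Y) ⊔ (X ⊔ Y)ᗮ) ⟂ ((X ⊔ Y) ⊓ (X ⊓ Y)ᗮ) := by
    rw [Submodule.isOrtho_iff_le]
    refine sup_le ?_ (Submodule.orthogonal_le inf_le_left)
    exact (X ⊓ Y).le_orthogonal_orthogonal.trans (Submodule.orthogonal_le inf_le_right)
  have hne12 : (X ⊓ Y) ⊔ (X ⊔ Y)ᗮ ≠ (X ⊔ Y) ⊓ (X ⊓ Y)ᗮ := by
    intro h
    rw [Submodule.isOrtho_iff_le, ← h] at hO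
    have h1 : (X ⊓ Y) ⊔ (X ⊔ Y)ᗮ ≤ ⊥ :=
      (le_inf le_rfl hO).trans_eq ((X ⊓ Y) ⊔ (X ⊔ Y)ᗮ).inf_orthogonal_eq_bot
    rw [le_bot_iff] at h1
    rw [h1] at hZ12
    simp at hZ12
  refine ⟨?_, hne12, hO⟩
  ext Z
  simp only [Set.mem_setOf_eq, Set.mem_insert_iff, Set.mem_singleton_iff]
  constructor
  · rintro ⟨hZd, hZX, hZY⟩
    exact forward_case hL1 hMp1 hZ22 hZd.2 hZX hZY
  · rintro (rfl | rfl)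
    · exact ⟨⟨inferInstance, hZ12⟩,
        orthoAdj_Z1 inf_le_left le_sup_left hL1 hX2 hMp1 hZ12,
        orthoAdj_Z1 inf_le_right le_sup_right hL1 hY2 hMp1 hZ12⟩
    · exact ⟨⟨inferInstance, hZ22⟩,
        orthoAdj_Z2 inf_le_left le_sup_left hL1 hX2 hZ22,
        orthoAdj_Z2 inf_le_right le_sup_right hL1 hY2 hZ22⟩

end
end
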